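/- (Carlitz) For all n ≥ 1, (x^n - y^n)/(x - y) = ∑_{k=0}^{⌊(n-1)/2⌋} q^{k(k+1)/2} · qbinom(n-k-1, k) · (-xy)^k · r_{n-1-2k}(x,y), where r_m(x,y) = ∑_{j=0}^{m} qbinom(m,j) x^j y^{m-j} is the Rogers-Szegő polynomial. -/

import Mathlib

open Finset

noncomputable section

abbrev K : Type := RatFunc ℚ

def q : K := RatFunc.X

def qint (a : K) (m : ℕ) : K := ∑ i ∈ range m, a ^ i

def qfact (a : K) (m : ℕ) : K := ∏ i ∈ range m, qint a (i + 1)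

def qbinom (a : K) (n k : ℕ) : K :=
  if k ≤ n then qfact a n / (qfact a k * qfact a (n - k)) else 0

/-- q-Fibonacci polynomials F_n(x,s,q) with base `a`. -/
def qF (a x s : K) : ℕ → K
  | 0 => 0
  | n + 1 => ∑ k ∈ range (n / 2 + 1),
      a ^ (k * (k + 1) / 2) * qbinom a (n - k) k * s ^ k * x ^ (n - 2 * k)

/-- q-Lucas polynomials L_n(x,s,q) with base `a` (L_0 = 2). -/
def qL (a x s : K) (n : ℕ) : K :=
  if n = 0 then 2 else
  ∑ k ∈ range (n / 2 + 1),
    a ^ (k * (k - 1) / 2) * (qint a n / qint a (n - k)) * qbinom a (n - k) k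
      * s ^ k * x ^ (n - 2 * k)

/-- Starred variant: L*_0 = 1, L*_n = L_n for n > 0. -/
def qLs (a x s : K) (n : ℕ) : K := if n = 0 then 1 else qL a x s n

/-- Rogers-Szegő polynomial. -/
def rs (a x y : K) (m : ℕ) : K := ∑ j ∈ range (m + 1), qbinom a m j * x ^ j * y ^ (m - j)

-- auxiliary lemmas
lemma q_pow_ne_one {m : ℕ} (hm : 1 ≤ m) : q ^ m ≠ 1 := by
  intro h
  have : (RatFunc.X : K) ^ m = 1 := h
  have h2 : algebraMap (Polynomial ℚ) K (Polynomial.X ^ m) = algebraMap (Polynomial ℚ) K 1 := by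
    simpa [map_pow, RatFunc.algebraMap_X] using this
  have h3 : (Polynomial.X : Polynomial ℚ) ^ m = 1 := RatFunc.algebraMap_injective ℚ h2
  have := congrArg Polynomial.natDegree h3
  simp [Polynomial.natDegree_X_pow] at this
  omega

lemma q_ne_one : q ≠ 1 := by simpa using q_pow_ne_one (m := 1) le_rfl

lemma one_sub_qint_mul : ∀ m, (1 - q) * qint q m = 1 - q ^ m := by
  intro m
  have := geom_sum_mul (x := q) (n := m)
  unfold qint
  linear_combination -this

lemma qint_ne_zero {m : ℕ} (hm : 1 ≤ m) : qint q m ≠ 0 := by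
  intro h
  have := one_sub_qint_mul m
  rw [h, mul_zero] at this
  exact q_pow_ne_one hm (by linear_combination this)

lemma qfact_ne_zero (m : ℕ) : qfact q m ≠ 0 := by
  unfold qfact
  exact Finset.prod_ne_zero_iff.mpr fun i _ => qint_ne_zero (Nat.le_add_left 1 i)

lemma qfact_succ (m : ℕ) : qfact q (m + 1) = qfact q m * qint q (m + 1) := by
  unfold qfact; rw [Finset.prod_range_succ]

lemma qint_add (a b : ℕ) : qint q (a + b) = qint q a + q ^ a * qint q b := by
  unfold qint
  rw [Finset.sum_range_add, Finset.mul_sum]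
  congr 1
  exact Finset.sum_congr rfl fun i _ => (pow_add q a i)

lemma qbinom_zero (n : ℕ) : qbinom q n 0 = 1 := by
  unfold qbinom
  rw [if_pos (Nat.zero_le n)]
  have h0 : qfact q 0 = 1 := rfl
  simp only [Nat.sub_zero, h0, one_mul]
  exact div_self (qfact_ne_zero n)

lemma qbinom_of_gt {n k : ℕ} (h : n < k) : qbinom q n k = 0 := by
  simp [qbinom, Nat.not_le.mpr h]

lemma qbinom_self (n : ℕ) : qbinom q n n = 1 := by
  unfold qbinom
  rw [if_pos le_rfl]
  have h0 : qfact q 0 = 1 := rfl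
  simp only [Nat.sub_self, h0, mul_one]
  exact div_self (qfact_ne_zero n)

section
lemma sub_succ' {m j : ℕ} (h : j < m) : m - j = (m - j - 1) + 1 := by omega

lemma qbinom_pascal1 {m j : ℕ} (hj : j ≤ m) :
    qbinom q (m + 1) (j + 1) = qbinom q m (j + 1) + q ^ (m - j) * qbinom q m j := by
  rcases eq_or_lt_of_le hj with rfl | hlt
  · rw [qbinom_self, qbinom_of_gt (Nat.lt_succ_self _), qbinom_self]
    simp
  · unfold qbinom
    rw [if_pos (by omega), if_pos (by omega), if_pos (by omega)]
    have h1 : m + 1 - (j + 1) = m - j := by omega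
    have h2 : m - (j + 1) = m - j - 1 := by omega
    rw [h1, h2, qfact_succ m, qfact_succ j, sub_succ' hlt, qfact_succ (m - j - 1)]
    have key : qint q (m + 1) = qint q (m - j) + q ^ (m - j) * qint q (j + 1) := by
      have : m + 1 = (m - j) + (j + 1) := by omega
      rw [this, qint_add]
    rw [key]
    have hfj := qfact_ne_zero j
    have hfmj := qfact_ne_zero (m - j - 1)
    have hij := qint_ne_zero (m := j + 1) (by omega)
    have himj : qint q (m - j - 1 + 1) ≠ 0 := by
      rw [← sub_succ' hlt]; exact qint_ne_zero (by omega)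
    field_simp
    rw [← sub_succ' hlt]
    ring_nf
    rw [mul_inv_cancel_right₀ hfmj]

lemma qbinom_A (m j : ℕ) :
    qint q (j + 1) * qbinom q (m + 1) (j + 1) = qint q (m + 1) * qbinom q m j := by
  by_cases hj : j ≤ m
  · unfold qbinom
    rw [if_pos (by omega), if_pos (by omega)]
    have h1 : m + 1 - (j + 1) = m - j := by omega
    rw [h1, qfact_succ m, qfact_succ j]
    have hfj := qfact_ne_zero j
    have hfmj := qfact_ne_zero (m - j)
    have hij := qint_ne_zero (m := j + 1) (by omega)
    field_simp
  · rw [qbinom_of_gt (by omega), qbinom_of_gt (by omega), mul_zero, mul_zero]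

lemma qbinom_B (m j : ℕ) :
    qint q (j + 1) * qbinom q m (j + 1) = qint q (m - j) * qbinom q m j := by
  by_cases hj : j + 1 ≤ m
  · unfold qbinom
    rw [if_pos hj, if_pos (by omega)]
    have h2 : m - j = (m - (j + 1)) + 1 := by omega
    rw [h2, qfact_succ j, qfact_succ (m - (j + 1))]
    have hfj := qfact_ne_zero j
    have hfmj := qfact_ne_zero (m - (j + 1))
    have hij := qint_ne_zero (m := j + 1) (by omega)
    have himj := qint_ne_zero (m := m - (j + 1) + 1) (by omega)
    field_simp
  · have hmj : m - j = 0 := by omega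
    rw [qbinom_of_gt (by omega), hmj]
    simp [qint]

lemma qbinom_C (m i : ℕ) :
    (1 - q ^ (m + 1 - i)) * qbinom q (m + 1) i = (1 - q ^ (m + 1)) * qbinom q m i := by
  rcases i with _ | i
  · rcases Nat.eq_zero_or_pos m with rfl | hm
    · simp [qbinom_zero]
    · rw [qbinom_zero, qbinom_zero]; simp
  · rw [show m + 1 - (i + 1) = m - i from by omega]
    have hB := qbinom_B (m + 1) (i + 1)
    have hA := qbinom_A m (i + 1)
    rw [show m + 1 - (i + 1) = m - i from by omega] at hB
    have key : qint q (m - i) * qbinom q (m + 1) (i + 1)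
        = qint q (m + 1) * qbinom q m (i + 1) := hB.symm.trans hA
    have e1 := one_sub_qint_mul (m - i)
    have e2 := one_sub_qint_mul (m + 1)
    linear_combination (1 - q) * key - qbinom q (m + 1) (i + 1) * e1
      + qbinom q m (i + 1) * e2

lemma rs_rec (x y : K) (m : ℕ) :
    rs q x y (m + 2)
      = (x + y) * rs q x y (m + 1) - (1 - q ^ (m + 1)) * (x * y) * rs q x y m := by
  have claim1 : (∑ i ∈ range (m + 2), qbinom q (m + 1) (i + 1) * x ^ (i + 1) * y ^ (m + 1 - i))
      + y ^ (m + 2) = y * rs q x y (m + 1) := by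
    rw [Finset.sum_range_succ, qbinom_of_gt (by omega)]
    unfold rs
    rw [Finset.mul_sum, Finset.sum_range_succ' _ (m + 1)]
    simp only [qbinom_zero, pow_zero, mul_one, one_mul, Nat.sub_zero, zero_mul, mul_zero,
      add_zero]
    congr 1
    · apply Finset.sum_congr rfl
      intro i hi
      have h1 : m + 1 - (i + 1) = m - i := by omega
      have h2 : m + 1 - i = (m - i) + 1 := by simp at hi; omega
      rw [h1, h2, pow_succ]
      ring
    · rw [← pow_succ']
  have claim2 : (∑ i ∈ range (m + 2), q ^ (m + 1 - i) * qbinom q (m + 1) i * x ^ (i + 1) * y ^ (m + 1 - i))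
      = x * rs q x y (m + 1) - (1 - q ^ (m + 1)) * (x * y) * rs q x y m := by
    have hxr : x * rs q x y (m + 1)
        = ∑ i ∈ range (m + 2), qbinom q (m + 1) i * x ^ (i + 1) * y ^ (m + 1 - i) := by
      unfold rs; rw [Finset.mul_sum]; apply Finset.sum_congr rfl; intro i _; ring
    have hyr : (1 - q ^ (m + 1)) * (x * y) * rs q x y m
        = ∑ i ∈ range (m + 2), (1 - q ^ (m + 1)) * qbinom q m i * x ^ (i + 1) * y ^ (m + 1 - i) := by
      unfold rs
      rw [Finset.sum_range_succ _ (m + 1), qbinom_of_gt (by omega), Finset.mul_sum]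
      simp only [zero_mul, mul_zero, add_zero]
      apply Finset.sum_congr rfl
      intro i hi
      have : m + 1 - i = (m - i) + 1 := by simp at hi; omega
      rw [this]
      ring
    rw [hxr, hyr, ← Finset.sum_sub_distrib]
    apply Finset.sum_congr rfl
    intro i _
    have hC := qbinom_C m i
    linear_combination (-(x ^ (i + 1) * y ^ (m + 1 - i))) * hC
  unfold rs
  rw [Finset.sum_range_succ' _ (m + 2)]
  simp only [qbinom_zero, pow_zero, mul_one, one_mul, Nat.sub_zero]
  have step : ∀ i ∈ range (m + 2),
      qbinom q (m + 2) (i + 1) * x ^ (i + 1) * y ^ (m + 2 - (i + 1))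
        = qbinom q (m + 1) (i + 1) * x ^ (i + 1) * y ^ (m + 1 - i)
          + q ^ (m + 1 - i) * qbinom q (m + 1) i * x ^ (i + 1) * y ^ (m + 1 - i) := by
    intro i hi
    have := qbinom_pascal1 (m := m + 1) (j := i) (by simp at hi; omega)
    rw [show m + 2 - (i + 1) = m + 1 - i from by omega, this]
    ring
  rw [Finset.sum_congr rfl step, Finset.sum_add_distrib]
  have goal := claim1
  have goal2 := claim2
  unfold rs at *
  linear_combination goal + goal2


lemma rs_zero (x y : K) : rs q x y 0 = 1 := by
  simp [rs, qbinom_zero]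

lemma rs_one (x y : K) : rs q x y 1 = y + x := by
  unfold rs
  rw [Finset.sum_range_succ, Finset.sum_range_succ, Finset.sum_range_zero,
    qbinom_zero, qbinom_self]
  simp

lemma G_succ (j : ℕ) : q ^ ((j+1) * (j+1+1) / 2) = q ^ (j * (j+1) / 2) * q ^ (j+1) := by
  rw [← pow_add]
  congr 1
  obtain ⟨t, ht⟩ := (Nat.even_mul_succ_self j)
  have h2 : (j+1)*(j+1+1) = j*(j+1) + 2*(j+1) := by ring
  omega

lemma main_rec (x y : K) {n : ℕ} (hn : 1 ≤ n) :
    ∑ k ∈ range (n + 2), q ^ (k*(k+1)/2) * qbinom q (n+1-k) k * (-(x*y))^k * rs q x y (n+1-2*k)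
      = (x + y) * ∑ k ∈ range (n + 2), q ^ (k*(k+1)/2) * qbinom q (n-k) k * (-(x*y))^k * rs q x y (n-2*k)
        - x*y * ∑ k ∈ range (n + 2), q ^ (k*(k+1)/2) * qbinom q (n-1-k) k * (-(x*y))^k * rs q x y (n-1-2*k) := by
  have E1 : (x + y) * ∑ k ∈ range (n + 2), q ^ (k*(k+1)/2) * qbinom q (n-k) k * (-(x*y))^k * rs q x y (n-2*k)
      = (∑ k ∈ range (n + 2), q ^ (k*(k+1)/2) * qbinom q (n-k) k * (-(x*y))^k * rs q x y (n+1-2*k))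
        + ∑ k ∈ range (n + 2), q ^ (k*(k+1)/2) * qbinom q (n-k) k * (1 - q^(n-2*k)) * (x*y) * (-(x*y))^k * rs q x y (n-1-2*k) := by
    rw [Finset.mul_sum, ← Finset.sum_add_distrib]
    apply Finset.sum_congr rfl
    intro k _
    by_cases hk : 2*k + 1 ≤ n
    · have h1 : n - 2*k = (n-1-2*k) + 1 := by omega
      have h2 : n + 1 - 2*k = (n-1-2*k) + 2 := by omega
      rw [h1, h2]
      linear_combination (-(q ^ (k*(k+1)/2) * qbinom q (n-k) k * (-(x*y))^k)) * rs_rec x y (n-1-2*k)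
    · by_cases hk2 : 2*k = n
      · have h1 : n - 2*k = 0 := by omega
        have h2 : n + 1 - 2*k = 1 := by omega
        have h3 : n - 1 - 2*k = 0 := by omega
        rw [h1, h2, h3, rs_zero, rs_one]
        simp only [pow_zero]
        ring
      · have hz : qbinom q (n-k) k = 0 := qbinom_of_gt (by omega)
        rw [hz]
        ring
  rw [E1]
  -- termwise shifted identity
  have hterm : ∀ j ∈ range (n+1),
      q ^ ((j+1)*(j+1+1)/2) * qbinom q (n+1-(j+1)) (j+1) * (-(x*y))^(j+1) * rs q x y (n+1-2*(j+1))
        = q ^ ((j+1)*(j+1+1)/2) * qbinom q (n-(j+1)) (j+1) * (-(x*y))^(j+1) * rs q x y (n+1-2*(j+1))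
          + (q ^ (j*(j+1)/2) * qbinom q (n-j) j * (1 - q^(n-2*j)) * (x*y) * (-(x*y))^j * rs q x y (n-1-2*j)
            - x*y * (q ^ (j*(j+1)/2) * qbinom q (n-1-j) j * (-(x*y))^j * rs q x y (n-1-2*j))) := by
    intro j hj
    simp only [Finset.mem_range] at hj
    by_cases hcase : 2*j + 1 ≤ n
    · rw [show n+1-(j+1) = n-1-j+1 from by omega, show n-(j+1) = n-1-j from by omega,
        show n+1-2*(j+1) = n-1-2*j from by omega]
      have hP := qbinom_pascal1 (m := n-1-j) (j := j) (by omega)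
      have hC := qbinom_C (n-1-j) j
      rw [show n-1-j+1-j = n-2*j from by omega, show n-1-j+1 = n-j from by omega] at hC
      rw [show n-1-j-j = n-1-2*j from by omega] at hP
      have hG := G_succ j
      have hq : q^(j+1) * q^(n-1-2*j) = q^(n-j) := by
        rw [← pow_add]; congr 1; omega
      rw [hG, hP]
      linear_combination (-((x*y) * (-(x*y))^j * rs q x y (n-1-2*j) * q ^ (j*(j+1)/2))) * hC
        + qbinom q (n-1-j) j * (-(x*y))^(j+1) * rs q x y (n-1-2*j) * q ^ (j*(j+1)/2) * hq
    · have hz1 : qbinom q (n+1-(j+1)) (j+1) = 0 := qbinom_of_gt (by omega)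
      have hz2 : qbinom q (n-(j+1)) (j+1) = 0 := qbinom_of_gt (by omega)
      have hz3 : qbinom q (n-1-j) j = 0 := qbinom_of_gt (by omega)
      rw [hz1, hz2, hz3, show n-2*j = 0 from by omega, pow_zero]
      ring
  -- peel sums
  rw [Finset.sum_range_succ' _ (n+1)]
  rw [Finset.sum_range_succ'
    (fun k => q ^ (k*(k+1)/2) * qbinom q (n-k) k * (-(x*y))^k * rs q x y (n+1-2*k)) (n+1)]
  rw [Finset.sum_range_succ
    (fun k => q ^ (k*(k+1)/2) * qbinom q (n-k) k * (1 - q^(n-2*k)) * (x*y) * (-(x*y))^k * rs q x y (n-1-2*k)) (n+1)]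
  rw [Finset.sum_range_succ
    (fun k => q ^ (k*(k+1)/2) * qbinom q (n-1-k) k * (-(x*y))^k * rs q x y (n-1-2*k)) (n+1)]
  have hlastC : q ^ ((n+1)*((n+1)+1)/2) * qbinom q (n-(n+1)) (n+1) * (1 - q^(n-2*(n+1))) * (x*y) * (-(x*y))^(n+1) * rs q x y (n-1-2*(n+1)) = 0 := by
    rw [show n-(n+1) = 0 from by omega, qbinom_of_gt (by omega : (0:ℕ) < n+1)]
    ring
  have hlastD : q ^ ((n+1)*((n+1)+1)/2) * qbinom q (n-1-(n+1)) (n+1) * (-(x*y))^(n+1) * rs q x y (n-1-2*(n+1)) = 0 := by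
    rw [show n-1-(n+1) = 0 from by omega, qbinom_of_gt (by omega : (0:ℕ) < n+1)]
    ring
  rw [hlastC, hlastD, add_zero]
  rw [qbinom_zero, qbinom_zero]
  have hsplit := Finset.sum_congr rfl hterm
  rw [hsplit, Finset.sum_add_distrib, Finset.sum_sub_distrib, ← Finset.mul_sum]
  ring


lemma trunc (x y : K) (n N : ℕ) (hN : (n-1)/2 + 1 ≤ N) :
    ∑ k ∈ range N, q ^ (k*(k+1)/2) * qbinom q (n-k-1) k * (-(x*y))^k * rs q x y (n-1-2*k)
      = ∑ k ∈ range ((n-1)/2 + 1), q ^ (k*(k+1)/2) * qbinom q (n-k-1) k * (-(x*y))^k * rs q x y (n-1-2*k) := by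
  refine (Finset.sum_subset (Finset.range_subset_range.mpr hN) ?_).symm
  intro k hk hk2
  simp only [Finset.mem_range] at hk hk2
  rw [qbinom_of_gt (show n-k-1 < k by omega)]
  ring

lemma geo_rec (x y : K) (n : ℕ) :
    ∑ i ∈ range (n+2), x^i * y^(n+2-1-i)
      = (x + y) * ∑ i ∈ range (n+1), x^i * y^(n+1-1-i)
        - x*y * ∑ i ∈ range n, x^i * y^(n-1-i) := by
  have L : ∑ i ∈ range (n+2), x^i * y^(n+2-1-i)
      = (∑ j ∈ range (n+1), x^(j+1) * y^(n-j)) + y^(n+1) := by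
    rw [Finset.sum_range_succ' (fun i => x^i * y^(n+2-1-i)) (n+1)]
    congr 1
    · apply Finset.sum_congr rfl; intro j _
      rw [show n+2-1-(j+1) = n-j from by omega]
    · rw [show n+2-1-0 = n+1 from by omega, pow_zero, one_mul]
  have R1 : x * ∑ i ∈ range (n+1), x^i * y^(n+1-1-i)
      = ∑ i ∈ range (n+1), x^(i+1) * y^(n-i) := by
    rw [Finset.mul_sum]
    apply Finset.sum_congr rfl; intro i _
    rw [show n+1-1-i = n-i from by omega]; ring
  have R2 : y * ∑ i ∈ range (n+1), x^i * y^(n+1-1-i)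
      = (∑ j ∈ range n, x^(j+1) * y^(n-j)) + y^(n+1) := by
    rw [Finset.mul_sum, Finset.sum_range_succ' (fun i => y * (x^i * y^(n+1-1-i))) n]
    congr 1
    · apply Finset.sum_congr rfl; intro j hj
      simp only [Finset.mem_range] at hj
      rw [show n-j = (n+1-1-(j+1))+1 from by omega, pow_succ]
      ring
    · rw [show n+1-1-0 = n from by omega, pow_zero, one_mul, ← pow_succ']
  have R3 : x*y * ∑ i ∈ range n, x^i * y^(n-1-i)
      = ∑ i ∈ range n, x^(i+1) * y^(n-i) := by
    rw [Finset.mul_sum]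
    apply Finset.sum_congr rfl; intro i hi
    simp only [Finset.mem_range] at hi
    rw [show n-i = (n-1-i)+1 from by omega, pow_succ]
    ring
  have expand : (x+y) * ∑ i ∈ range (n+1), x^i*y^(n+1-1-i) - x*y*∑ i ∈ range n, x^i * y^(n-1-i)
      = (∑ i ∈ range (n+1), x^(i+1)*y^(n-i)) + ((∑ j ∈ range n, x^(j+1)*y^(n-j)) + y^(n+1))
        - ∑ i ∈ range n, x^(i+1)*y^(n-i) := by
    rw [← R1, ← R2, ← R3]; ring
  rw [L, expand]
  ring

lemma baseP1 (x y : K) :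
    ∑ i ∈ range 1, x ^ i * y ^ (1 - 1 - i)
      = ∑ k ∈ range ((1 - 1) / 2 + 1), q ^ (k * (k + 1) / 2) * qbinom q (1 - k - 1) k
          * (-(x * y)) ^ k * rs q x y (1 - 1 - 2 * k) := by
  norm_num [qbinom_zero, rs_zero]

lemma baseP2 (x y : K) :
    ∑ i ∈ range 2, x ^ i * y ^ (2 - 1 - i)
      = ∑ k ∈ range ((2 - 1) / 2 + 1), q ^ (k * (k + 1) / 2) * qbinom q (2 - k - 1) k
          * (-(x * y)) ^ k * rs q x y (2 - 1 - 2 * k) := by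
  norm_num [Finset.sum_range_succ, qbinom_zero, rs_one]

lemma mainP (x y : K) : ∀ m : ℕ,
    (∑ i ∈ range (m+1), x ^ i * y ^ (m+1 - 1 - i)
      = ∑ k ∈ range ((m+1 - 1) / 2 + 1), q ^ (k * (k + 1) / 2) * qbinom q (m+1 - k - 1) k
          * (-(x * y)) ^ k * rs q x y (m+1 - 1 - 2 * k))
    ∧ (∑ i ∈ range (m+2), x ^ i * y ^ (m+2 - 1 - i)
      = ∑ k ∈ range ((m+2 - 1) / 2 + 1), q ^ (k * (k + 1) / 2) * qbinom q (m+2 - k - 1) k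
          * (-(x * y)) ^ k * rs q x y (m+2 - 1 - 2 * k)) := by
  intro m
  induction m with
  | zero => exact ⟨baseP1 x y, baseP2 x y⟩
  | succ m ih =>
    refine ⟨ih.2, ?_⟩
    have hrec := geo_rec x y (m+1)
    rw [hrec, show m+1+1 = m+2 from rfl, ih.2, ih.1]
    have t1 := trunc x y (m+1+2) (m+1+2) (by omega)
    have t2 := trunc x y (m+2) (m+1+2) (by omega)
    have t3 := trunc x y (m+1) (m+1+2) (by omega)
    rw [← t1, ← t2, ← t3]
    have c1 : ∑ k ∈ range (m+1+2), q ^ (k*(k+1)/2) * qbinom q (m+1+2-k-1) k * (-(x*y))^k * rs q x y (m+1+2-1-2*k)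
        = ∑ k ∈ range (m+1+2), q ^ (k*(k+1)/2) * qbinom q (m+1+1-k) k * (-(x*y))^k * rs q x y (m+1+1-2*k) := by
      apply Finset.sum_congr rfl; intro k _
      rw [show m+1+2-k-1 = m+1+1-k from by omega, show m+1+2-1-2*k = m+1+1-2*k from by omega]
    have c2 : ∑ k ∈ range (m+1+2), q ^ (k*(k+1)/2) * qbinom q (m+2-k-1) k * (-(x*y))^k * rs q x y (m+2-1-2*k)
        = ∑ k ∈ range (m+1+2), q ^ (k*(k+1)/2) * qbinom q (m+1-k) k * (-(x*y))^k * rs q x y (m+1-2*k) := by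
      apply Finset.sum_congr rfl; intro k _
      rw [show m+2-k-1 = m+1-k from by omega, show m+2-1-2*k = m+1-2*k from by omega]
    have c3 : ∑ k ∈ range (m+1+2), q ^ (k*(k+1)/2) * qbinom q (m+1-k-1) k * (-(x*y))^k * rs q x y (m+1-1-2*k)
        = ∑ k ∈ range (m+1+2), q ^ (k*(k+1)/2) * qbinom q (m+1-1-k) k * (-(x*y))^k * rs q x y (m+1-1-2*k) := by
      apply Finset.sum_congr rfl; intro k _
      rw [show m+1-k-1 = m+1-1-k from by omega]
    rw [c1, c2, c3]
    exact (main_rec x y (n := m+1) (by omega)).symm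


/-- q-Pochhammer (q;q)_m. -/
def qpoch (a : K) (m : ℕ) : K := ∏ j ∈ range m, (1 - a ^ (j + 1))

theorem stmt10 (x y : K) (n : ℕ) (hn : 1 ≤ n) :
    ∑ i ∈ range n, x ^ i * y ^ (n - 1 - i)
      = ∑ k ∈ range ((n - 1) / 2 + 1), q ^ (k * (k + 1) / 2) * qbinom q (n - k - 1) k
          * (-(x * y)) ^ k * rs q x y (n - 1 - 2 * k) := by
  obtain ⟨m, rfl⟩ : ∃ m, n = m + 1 := ⟨n - 1, by omega⟩
  exact (mainP x y m).1
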